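/- Let S = ⟨qm₁,…,qm_d, pn₁,…,pn_k⟩ be a gluing of S₁ and S₂ and let x∈S₁ be nonzero. Then: (1) AP(S, qx) = { qz₁ + pz₂ : z₁∈AP(S₁,x), z₂∈AP(S₂,q) }; (2) if qz₁ + pz₂ ∈ AP(S, qx) with z₁∈S₁ and z₂∈S₂, then z₁∈AP(S₁,x). -/

import Mathlib

open scoped Pointwise

/-- `S ⊆ ℕ` is a numerical semigroup: it contains `0`, is closed under
addition, and has finite complement in `ℕ`. -/
def IsNumSgp (S : Set ℕ) : Prop :=
  (0 : ℕ) ∈ S ∧ (∀ a ∈ S, ∀ b ∈ S, a + b ∈ S) ∧ {x : ℕ | x ∉ S}.Finite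

/-- `nM S t` is the `t`-fold sumset of the maximal ideal `M = S \ {0}`,
with the convention `nM S 0 = S`. -/
def nM (S : Set ℕ) : ℕ → Set ℕ
  | 0 => S
  | t + 1 => (S \ {0}) + nM S t

/-- the order of `s` with respect to `S` : the largest `t` with `s ∈ tM`. -/
noncomputable def ordS (S : Set ℕ) (s : ℕ) : ℕ := sSup {t : ℕ | s ∈ nM S t}

/-- the multiplicity of `S` : its least nonzero element. -/
noncomputable def mult (S : Set ℕ) : ℕ := sInf {x : ℕ | x ∈ S ∧ x ≠ 0}

/-- the Apéry set of `S` with respect to `x` : elements `s ∈ S` with `s - x ∉ S`. -/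
def Ap (S : Set ℕ) (x : ℕ) : Set ℕ := {s : ℕ | s ∈ S ∧ ¬ ∃ t ∈ S, s = t + x}

/-- membership of an integer in (the image in `ℤ` of) `S`. -/
def zmem (S : Set ℕ) (z : ℤ) : Prop := ∃ t ∈ S, (t : ℤ) = z

/-- the Frobenius number of `S` : the largest integer not in `S`. -/
noncomputable def Frob (S : Set ℕ) : ℤ := sSup {z : ℤ | ¬ zmem S z}

/-- `S` is symmetric: for every integer `z`, `z ∈ S` iff `F(S) - z ∉ S`. -/
def IsSymmetric (S : Set ℕ) : Prop := ∀ z : ℤ, zmem S z ↔ ¬ zmem S (Frob S - z)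

/-- the set of maximal elements of `Ap S x` with respect to the order
`u ⪯ v` iff `v = u + z` for some `z ∈ S`. -/
def MaxAp (S : Set ℕ) (x : ℕ) : Set ℕ :=
  {w : ℕ | w ∈ Ap S x ∧ ∀ y ∈ Ap S x, (∃ z ∈ S, y = w + z) → y = w}

/-- the set of maximal elements of `Ap S x` with respect to the order
`u ⪯_M v` iff `v = u + z` for some `z ∈ S` with `ord(v) = ord(u) + ord(z)`. -/
def MaxMAp (S : Set ℕ) (x : ℕ) : Set ℕ :=
  {w : ℕ | w ∈ Ap S x ∧ ∀ y ∈ Ap S x,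
    (∃ z ∈ S, y = w + z ∧ ordS S y = ordS S w + ordS S z) → y = w}

/-- `S` is M-pure with respect to `x` : all maximal elements of `Ap S x`
under `⪯_M` have the same order. -/
def MPureWrt (S : Set ℕ) (x : ℕ) : Prop :=
  ∀ w ∈ MaxMAp S x, ∀ w' ∈ MaxMAp S x, ordS S w = ordS S w'

/-- `S` is M-pure : it is M-pure with respect to its multiplicity. -/
def MPure (S : Set ℕ) : Prop := MPureWrt S (mult S)

/-- `β_i(x)` : the number of elements of `Ap S x` of order `i`. -/
noncomputable def betaS (S : Set ℕ) (x i : ℕ) : ℕ := {w ∈ Ap S x | ordS S w = i}.ncard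

/-- `d(x)` : the maximal order of an element of `Ap S x`. -/
noncomputable def dS (S : Set ℕ) (x : ℕ) : ℕ := sSup (ordS S '' Ap S x)

/-- the reduction number of `S` : the least `r` with `(r+1)M = m(S) + rM`. -/
noncomputable def redNum (S : Set ℕ) : ℕ :=
  sInf {r : ℕ | nM S (r + 1) = (fun y => mult S + y) '' nM S r}

/-- `l_x(S) = max { ord(s+x) - ord(x) - ord(s) : s ∈ S, ord(s) ≤ r }`. -/
noncomputable def lS (S : Set ℕ) (x : ℕ) : ℕ :=
  sSup {t : ℕ | ∃ s ∈ S, ordS S s ≤ redNum S ∧ t = ordS S (s + x) - ordS S x - ordS S s}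

/-- the Hilbert function of `S`. -/
noncomputable def HilbS (S : Set ℕ) (t : ℕ) : ℕ := (nM S t \ nM S (t + 1)).ncard

/-- The data of a gluing `S = ⟨q m₁, …, q m_d, p n₁, …, p n_k⟩` of two numerical
semigroups `S₁ = ⟨m₁, …, m_d⟩` and `S₂ = ⟨n₁, …, n_k⟩`, minimally generated by
`m₁ < ⋯ < m_d` and `n₁ < ⋯ < n_k`, where `p ∈ S₁ \ {m₁, …, m_d}`,
`q ∈ S₂ \ {n₁, …, n_k}` and `gcd(p, q) = 1`. -/
structure Gluing where
  d : ℕ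
  k : ℕ
  hd : 0 < d
  hk : 0 < k
  m : Fin d → ℕ
  n : Fin k → ℕ
  p : ℕ
  q : ℕ
  hm : StrictMono m
  hn : StrictMono n
  hmin₁ : ∀ i, m i ∉ AddSubmonoid.closure (Set.range m \ {m i})
  hmin₂ : ∀ j, n j ∉ AddSubmonoid.closure (Set.range n \ {n j})
  hnum₁ : IsNumSgp (AddSubmonoid.closure (Set.range m) : Set ℕ)
  hnum₂ : IsNumSgp (AddSubmonoid.closure (Set.range n) : Set ℕ)
  hp : p ∈ AddSubmonoid.closure (Set.range m)
  hq : q ∈ AddSubmonoid.closure (Set.range n)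
  hpm : p ∉ Set.range m
  hqn : q ∉ Set.range n
  hpq : Nat.gcd p q = 1

/-- the numerical semigroup `S₁ = ⟨m₁, …, m_d⟩`. -/
def Gluing.S₁ (G : Gluing) : Set ℕ := (AddSubmonoid.closure (Set.range G.m) : Set ℕ)

/-- the numerical semigroup `S₂ = ⟨n₁, …, n_k⟩`. -/
def Gluing.S₂ (G : Gluing) : Set ℕ := (AddSubmonoid.closure (Set.range G.n) : Set ℕ)

/-- the glued numerical semigroup `S = ⟨q m₁, …, q m_d, p n₁, …, p n_k⟩`. -/
def Gluing.S (G : Gluing) : Set ℕ :=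
  (AddSubmonoid.closure
    ((fun x => G.q * x) '' Set.range G.m ∪ (fun x => G.p * x) '' Set.range G.n) : Set ℕ)

/-- the smallest generator `m₁` of `S₁`. -/
def Gluing.m₁ (G : Gluing) : ℕ := G.m ⟨0, G.hd⟩

/-- the smallest generator `n₁` of `S₂`. -/
def Gluing.n₁ (G : Gluing) : ℕ := G.n ⟨0, G.hk⟩

/-- the gluing is specific if `ord_{S₂}(q) + l_q(S₂) ≤ ord_{S₁}(p)`. -/
def Gluing.Specific (G : Gluing) : Prop := ordS G.S₂ G.q + lS G.S₂ G.q ≤ ordS G.S₁ G.p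

/-- the gluing is nice if `q = a n₁` for some `1 < a ≤ ord_{S₁}(p)`. -/
def Gluing.Nice (G : Gluing) : Prop := ∃ a : ℕ, 1 < a ∧ a ≤ ordS G.S₁ G.p ∧ G.q = a * G.n₁

namespace GluAux

lemma one_mem_closure_nat {T : Set ℕ} (h : (1 : ℕ) ∈ AddSubmonoid.closure T) : 1 ∈ T := by
  have : ∀ y ∈ AddSubmonoid.closure T, y = 1 → 1 ∈ T := by
    intro y hy
    induction hy using AddSubmonoid.closure_induction with
    | mem z hz => intro hz1; rwa [hz1] at hz
    | zero => omega
    | add a b ha hb iha ihb =>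
      intro hab
      have hab' : a = 1 ∨ b = 1 := by omega
      rcases hab' with h | h
      · exact iha h
      · exact ihb h
  exact this 1 h rfl

lemma gen_ne_zero (G : Gluing) (i : Fin G.d) : G.m i ≠ 0 := by
  intro h0
  exact G.hmin₁ i (by rw [h0]; exact AddSubmonoid.zero_mem _)

lemma gen2_ne_zero (G : Gluing) (j : Fin G.k) : G.n j ≠ 0 := by
  intro h0
  exact G.hmin₂ j (by rw [h0]; exact AddSubmonoid.zero_mem _)

lemma mem_S₁ (G : Gluing) {a : ℕ} :
    a ∈ G.S₁ ↔ a ∈ AddSubmonoid.closure (Set.range G.m) := Iff.rfl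

lemma mem_S₂ (G : Gluing) {a : ℕ} :
    a ∈ G.S₂ ↔ a ∈ AddSubmonoid.closure (Set.range G.n) := Iff.rfl

lemma S₁_add_mem (G : Gluing) {a b : ℕ} (ha : a ∈ G.S₁) (hb : b ∈ G.S₁) : a + b ∈ G.S₁ :=
  AddSubmonoid.add_mem _ ha hb

lemma S₂_add_mem (G : Gluing) {a b : ℕ} (ha : a ∈ G.S₂) (hb : b ∈ G.S₂) : a + b ∈ G.S₂ :=
  AddSubmonoid.add_mem _ ha hb

lemma S₁_mul_mem (G : Gluing) {a : ℕ} (ha : a ∈ G.S₁) (c : ℕ) : c * a ∈ G.S₁ := by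
  have : c • a ∈ AddSubmonoid.closure (Set.range G.m) := AddSubmonoid.nsmul_mem _ ha c
  simpa [smul_eq_mul, Gluing.S₁] using this

lemma S₂_mul_mem (G : Gluing) {a : ℕ} (ha : a ∈ G.S₂) (c : ℕ) : c * a ∈ G.S₂ := by
  have : c • a ∈ AddSubmonoid.closure (Set.range G.n) := AddSubmonoid.nsmul_mem _ ha c
  simpa [smul_eq_mul, Gluing.S₂] using this

lemma p_pos (G : Gluing) : 0 < G.p := by
  rcases Nat.eq_zero_or_pos G.p with h0 | h
  · exfalso
    have hq1 : G.q = 1 := by have := G.hpq; rw [h0] at this; simpa using this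
    have : (1 : ℕ) ∈ Set.range G.n := one_mem_closure_nat (by rw [← hq1]; exact G.hq)
    exact G.hqn (hq1 ▸ this)
  · exact h

lemma q_pos (G : Gluing) : 0 < G.q := by
  rcases Nat.eq_zero_or_pos G.q with h0 | h
  · exfalso
    have hp1 : G.p = 1 := by have := G.hpq; rw [h0] at this; simpa using this
    have : (1 : ℕ) ∈ Set.range G.m := one_mem_closure_nat (by rw [← hp1]; exact G.hp)
    exact G.hpm (hp1 ▸ this)
  · exact h

lemma q_mul_mem (G : Gluing) {a : ℕ} (ha : a ∈ G.S₁) : G.q * a ∈ G.S := by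
  rw [mem_S₁] at ha
  induction ha using AddSubmonoid.closure_induction with
  | mem z hz =>
    exact AddSubmonoid.subset_closure (Or.inl ⟨z, hz, rfl⟩)
  | zero => rw [mul_zero]; exact AddSubmonoid.zero_mem _
  | add a b ha hb iha ihb =>
    have : G.q * (a + b) = G.q * a + G.q * b := by ring
    rw [this]; exact AddSubmonoid.add_mem _ iha ihb

lemma p_mul_mem (G : Gluing) {b : ℕ} (hb : b ∈ G.S₂) : G.p * b ∈ G.S := by
  rw [mem_S₂] at hb
  induction hb using AddSubmonoid.closure_induction with
  | mem z hz =>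
    exact AddSubmonoid.subset_closure (Or.inr ⟨z, hz, rfl⟩)
  | zero => rw [mul_zero]; exact AddSubmonoid.zero_mem _
  | add a b ha hb iha ihb =>
    have : G.p * (a + b) = G.p * a + G.p * b := by ring
    rw [this]; exact AddSubmonoid.add_mem _ iha ihb

lemma mem_S_iff (G : Gluing) (u : ℕ) :
    u ∈ G.S ↔ ∃ a ∈ G.S₁, ∃ b ∈ G.S₂, u = G.q * a + G.p * b := by
  constructor
  · intro hu
    induction hu using AddSubmonoid.closure_induction with
    | mem z hz =>
      rcases hz with ⟨w, hw, rfl⟩ | ⟨w, hw, rfl⟩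
      · exact ⟨w, AddSubmonoid.subset_closure hw, 0, AddSubmonoid.zero_mem _, by ring⟩
      · exact ⟨0, AddSubmonoid.zero_mem _, w, AddSubmonoid.subset_closure hw, by ring⟩
    | zero =>
      exact ⟨0, AddSubmonoid.zero_mem _, 0, AddSubmonoid.zero_mem _, by ring⟩
    | add a b ha hb iha ihb =>
      obtain ⟨a₁, ha₁, b₁, hb₁, rfl⟩ := iha
      obtain ⟨a₂, ha₂, b₂, hb₂, rfl⟩ := ihb
      exact ⟨a₁ + a₂, S₁_add_mem G ha₁ ha₂, b₁ + b₂, S₂_add_mem G hb₁ hb₂, by ring⟩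
  · rintro ⟨a, ha, b, hb, rfl⟩
    exact AddSubmonoid.add_mem _ (q_mul_mem G ha) (p_mul_mem G hb)

/-- Key coprime argument: `q z₁ + p z₂ = q a + q x + p b` with the given memberships
forces a contradiction. -/
lemma key_contra (G : Gluing) {x z₁ z₂ a b : ℕ}
    (hz₁ : z₁ ∈ Ap G.S₁ x) (hz₂ : z₂ ∈ Ap G.S₂ G.q)
    (ha : a ∈ G.S₁) (hb : b ∈ G.S₂)
    (he : G.q * z₁ + G.p * z₂ = G.q * a + G.q * x + G.p * b) : False := by
  have hqz : (G.q : ℤ) ≠ 0 := by exact_mod_cast (q_pos G).ne'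
  have heZ : (G.q : ℤ) * z₁ + G.p * z₂ = G.q * a + G.q * x + G.p * b := by exact_mod_cast he
  have key : (G.q : ℤ) * ((z₁ : ℤ) - (a + x)) = (G.p : ℤ) * ((b : ℤ) - z₂) := by ring_nf; linarith
  have hcop : IsCoprime (G.q : ℤ) (G.p : ℤ) := by
    rw [Int.isCoprime_iff_gcd_eq_one]
    simpa [Int.gcd, Nat.gcd_comm] using G.hpq
  have hdvd : (G.q : ℤ) ∣ ((b : ℤ) - z₂) :=
    hcop.dvd_of_dvd_mul_left ⟨(z₁ : ℤ) - (a + x), by linarith [key]⟩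
  obtain ⟨c, hc⟩ := hdvd
  have hzc : (z₁ : ℤ) - (a + x) = (G.p : ℤ) * c := by
    have h2 : (G.q : ℤ) * ((z₁ : ℤ) - (a + x)) = (G.q : ℤ) * ((G.p : ℤ) * c) := by
      rw [key, hc]; ring
    exact mul_left_cancel₀ hqz h2
  rcases le_or_gt 0 c with hc0 | hc0
  · -- then z₁ = (a + p c) + x, contradicting z₁ ∈ Ap S₁ x
    lift c to ℕ using hc0 with c'
    have hz : z₁ = (a + G.p * c') + x := by
      have : (z₁ : ℤ) = ((a + G.p * c' + x : ℕ) : ℤ) := by push_cast; linarith [hzc]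
      exact_mod_cast this
    exact hz₁.2 ⟨a + G.p * c', S₁_add_mem G ha (by
      have := S₁_mul_mem G G.hp c'
      simpa [mul_comm] using this), hz⟩
  · -- then z₂ = (b + q (c''-1)) + q, contradicting z₂ ∈ Ap S₂ q
    set c'' : ℕ := (-c).toNat with hc''
    have hc''1 : 1 ≤ c'' := by simp [hc'']; omega
    have hcz : (c : ℤ) = -(c'' : ℤ) := by simp [hc'']; omega
    have hz : z₂ = (b + G.q * (c'' - 1)) + G.q := by
      have h3 : (z₂ : ℤ) = (b : ℤ) + G.q * c'' := by rw [hcz] at hc; linarith [hc]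
      have h4 : (z₂ : ℤ) = ((b + G.q * (c'' - 1) + G.q : ℕ) : ℤ) := by
        push_cast [hc''1]; linarith [h3]
      exact_mod_cast h4
    exact hz₂.2 ⟨b + G.q * (c'' - 1), S₂_add_mem G hb (by
      have := S₂_mul_mem G G.hq (c'' - 1)
      simpa [mul_comm] using this), hz⟩

/-- Any representation can be reduced to one with second coordinate in `Ap S₂ q`. -/
lemma reduce (G : Gluing) :
    ∀ z₂, z₂ ∈ G.S₂ → ∀ z₁ ∈ G.S₁,
      ∃ w₁ ∈ G.S₁, ∃ w₂ ∈ Ap G.S₂ G.q,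
        G.q * z₁ + G.p * z₂ = G.q * w₁ + G.p * w₂ := by
  intro z₂
  induction z₂ using Nat.strong_induction_on with
  | _ z₂ ih =>
    intro hz₂ z₁ hz₁
    by_cases h : ∃ t ∈ G.S₂, z₂ = t + G.q
    · obtain ⟨t, ht, rfl⟩ := h
      have hlt : t < t + G.q := by have := q_pos G; omega
      obtain ⟨w₁, hw₁, w₂, hw₂, he⟩ := ih t hlt ht (z₁ + G.p) (S₁_add_mem G hz₁ G.hp)
      exact ⟨w₁, hw₁, w₂, hw₂, by rw [← he]; ring⟩
    · exact ⟨z₁, hz₁, z₂, ⟨hz₂, h⟩, rfl⟩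

end GluAux

open GluAux

/-- for a gluing `S` of `S₁` and `S₂` and nonzero `x ∈ S₁`:
(1) `AP(S, qx) = { qz₁ + pz₂ : z₁ ∈ AP(S₁,x), z₂ ∈ AP(S₂,q) }`;
(2) if `qz₁ + pz₂ ∈ AP(S, qx)` with `z₁ ∈ S₁`, `z₂ ∈ S₂`, then `z₁ ∈ AP(S₁,x)`. -/
theorem stmt8 (G : Gluing) (x : ℕ) (hx : x ∈ G.S₁) (hx0 : x ≠ 0) :
    (Ap G.S (G.q * x) =
      {u : ℕ | ∃ z₁ ∈ Ap G.S₁ x, ∃ z₂ ∈ Ap G.S₂ G.q, u = G.q * z₁ + G.p * z₂}) ∧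
    (∀ z₁ ∈ G.S₁, ∀ z₂ ∈ G.S₂,
      G.q * z₁ + G.p * z₂ ∈ Ap G.S (G.q * x) → z₁ ∈ Ap G.S₁ x) := by
  have part2 : ∀ z₁ ∈ G.S₁, ∀ z₂ ∈ G.S₂,
      G.q * z₁ + G.p * z₂ ∈ Ap G.S (G.q * x) → z₁ ∈ Ap G.S₁ x := by
    intro z₁ hz₁ z₂ hz₂ hu
    refine ⟨hz₁, ?_⟩
    rintro ⟨t, ht, he⟩
    exact hu.2 ⟨G.q * t + G.p * z₂,
      AddSubmonoid.add_mem _ (q_mul_mem G ht) (p_mul_mem G hz₂),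
      by rw [he]; ring⟩
  refine ⟨?_, part2⟩
  ext u
  constructor
  · intro hu
    obtain ⟨a, ha, b, hb, rfl⟩ := (mem_S_iff G u).mp hu.1
    obtain ⟨w₁, hw₁, w₂, hw₂, he⟩ := reduce G b hb a ha
    rw [he] at hu ⊢
    exact ⟨w₁, part2 w₁ hw₁ w₂ hw₂.1 hu, w₂, hw₂, rfl⟩
  · rintro ⟨z₁, hz₁, z₂, hz₂, rfl⟩
    refine ⟨AddSubmonoid.add_mem _ (q_mul_mem G hz₁.1) (p_mul_mem G hz₂.1), ?_⟩
    rintro ⟨t, ht, he⟩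
    obtain ⟨a, ha, b, hb, rfl⟩ := (mem_S_iff G t).mp ht
    exact key_contra G hz₁ hz₂ ha hb (by rw [he]; ring)
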